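/- If n is an odd positive integer with KL(n) > 0, then h(n) ≥ 16/π². -/

import Mathlib

open Real Finset

/-- The completely multiplicative function `n ↦ (n²)⁻¹` on `ℝ`. -/
noncomputable def invSq : ℕ →* ℝ where
  toFun n := (((n : ℝ)) ^ 2)⁻¹
  map_one' := by norm_num
  map_mul' m n := by push_cast; rw [mul_pow, mul_inv]

lemma summable_invSq : Summable (fun n : ℕ => (((n : ℝ)) ^ 2)⁻¹) := by
  simpa [one_div] using Real.summable_one_div_nat_pow.mpr (by norm_num : 1 < 2)

lemma hasSum_invSq : HasSum (fun n : ℕ => (((n : ℝ)) ^ 2)⁻¹) (π ^ 2 / 6) := by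
  simpa [one_div] using hasSum_zeta_two

noncomputable def oddInvSq (n : ℕ) : ℝ := if Odd n then (((n : ℝ)) ^ 2)⁻¹ else 0

lemma hasSum_even_invSq :
    HasSum (fun k : ℕ => (((2 * k : ℕ) : ℝ) ^ 2)⁻¹) (π ^ 2 / 24) := by
  have h := hasSum_invSq.mul_left (4⁻¹ : ℝ)
  have h24 : (4⁻¹ : ℝ) * (π ^ 2 / 6) = π ^ 2 / 24 := by ring
  rw [h24] at h
  have heq : (fun k : ℕ => (4⁻¹ : ℝ) * (((k : ℝ)) ^ 2)⁻¹)
      = fun k : ℕ => (((2 * k : ℕ) : ℝ) ^ 2)⁻¹ := by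
    funext k; push_cast; rw [mul_pow, mul_inv]; norm_num
  rwa [heq] at h

lemma hasSum_oddInvSq : HasSum oddInvSq (π ^ 2 / 8) := by
  -- sum over odd naturals of (n²)⁻¹
  have hodd : ∃ c, HasSum (fun k : ℕ => (((2 * k + 1 : ℕ) : ℝ) ^ 2)⁻¹) c := by
    have : Summable (fun k : ℕ => (((2 * k + 1 : ℕ) : ℝ) ^ 2)⁻¹) := by
      have hinj : Function.Injective (fun k : ℕ => 2 * k + 1) := by
        intro a b hab; simp only at hab; omega
      exact summable_invSq.comp_injective hinj
    exact this
  obtain ⟨c, hc⟩ := hodd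
  have htot := HasSum.even_add_odd (f := fun n : ℕ => (((n : ℝ)) ^ 2)⁻¹) hasSum_even_invSq hc
  have hcval : c = π ^ 2 / 8 := by
    have := htot.unique hasSum_invSq
    linarith
  subst hcval
  have he : HasSum (fun k : ℕ => oddInvSq (2 * k)) 0 := by
    have : (fun k : ℕ => oddInvSq (2 * k)) = fun _ => (0 : ℝ) := by
      funext k; simp [oddInvSq, Nat.odd_iff]
    rw [this]; exact hasSum_zero
  have ho : HasSum (fun k : ℕ => oddInvSq (2 * k + 1)) (π ^ 2 / 8) := by
    have : (fun k : ℕ => oddInvSq (2 * k + 1))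
        = fun k : ℕ => (((2 * k + 1 : ℕ) : ℝ) ^ 2)⁻¹ := by
      funext k; simp [oddInvSq, Nat.odd_iff]
    rw [this]; exact hc
  simpa using HasSum.even_add_odd (f := oddInvSq) he ho

/-- Key analytic input: a finite product of `1 - p⁻²` over odd primes is at least `8/π²`. -/
lemma prod_one_sub_inv_sq_ge (S : Finset ℕ) (hP : ∀ p ∈ S, p.Prime) (h2 : 2 ∉ S) :
    8 / π ^ 2 ≤ ∏ p ∈ S, (1 - ((p : ℝ) ^ 2)⁻¹) := by
  have hsum : Summable (⇑invSq) := summable_invSq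
  have key := EulerProduct.prod_filter_prime_geometric_eq_tsum_factoredNumbers
    (f := invSq) hsum S
  have hfilter : S.filter Nat.Prime = S := filter_true_of_mem hP
  rw [hfilter] at key
  -- every element of factoredNumbers S is odd
  have hmem : ∀ m : Nat.factoredNumbers S, invSq m = oddInvSq m := by
    rintro ⟨m, hm0, hmf⟩
    have hmodd : Odd m := by
      rcases Nat.even_or_odd m with he | ho
      · exfalso
        have h2m : 2 ∈ Nat.primeFactorsList m :=
          (Nat.mem_primeFactorsList hm0).mpr ⟨Nat.prime_two, he.two_dvd⟩
        exact h2 (hmf 2 h2m)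
      · exact ho
    simp [invSq, oddInvSq, hmodd]
  have hbound : ∑' m : Nat.factoredNumbers S, invSq m ≤ π ^ 2 / 8 := by
    calc ∑' m : Nat.factoredNumbers S, invSq m
        = ∑' m : Nat.factoredNumbers S, oddInvSq m := tsum_congr hmem
      _ ≤ ∑' m : ℕ, oddInvSq m := by
          apply Summable.tsum_subtype_le oddInvSq _ ?_ hasSum_oddInvSq.summable
          intro m; unfold oddInvSq; positivity
      _ = π ^ 2 / 8 := hasSum_oddInvSq.tsum_eq
  rw [← key] at hbound
  have hppos : ∀ p ∈ S, (0 : ℝ) < 1 - ((p : ℝ) ^ 2)⁻¹ := by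
    intro p hp
    have : (2 : ℝ) ≤ p := by exact_mod_cast (hP p hp).two_le
    have : (1 : ℝ) < (p : ℝ) ^ 2 := by nlinarith
    have : ((p : ℝ) ^ 2)⁻¹ < 1 := by
      rw [inv_lt_one_iff₀]; right; exact this
    linarith
  have hprodpos : (0 : ℝ) < ∏ p ∈ S, (1 - ((p : ℝ) ^ 2)⁻¹) := prod_pos hppos
  have hinv : (∏ p ∈ S, (1 - ((p : ℝ) ^ 2)⁻¹))⁻¹ ≤ π ^ 2 / 8 := by
    rw [← prod_inv_distrib]
    calc ∏ p ∈ S, (1 - ((p : ℝ) ^ 2)⁻¹)⁻¹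
        = ∏ p ∈ S, (1 - invSq p)⁻¹ := by rfl
      _ ≤ π ^ 2 / 8 := hbound
  have hpi : (0 : ℝ) < π ^ 2 / 8 := by positivity
  calc (8 : ℝ) / π ^ 2 = (π ^ 2 / 8)⁻¹ := by rw [inv_div]
    _ ≤ ((∏ p ∈ S, (1 - ((p : ℝ) ^ 2)⁻¹))⁻¹)⁻¹ := by
        exact inv_anti₀ (by positivity) hinv
    _ = ∏ p ∈ S, (1 - ((p : ℝ) ^ 2)⁻¹) := inv_inv _

lemma sigma_div_mono {d n : ℕ} (hdn : d ∣ n) (hn : 0 < n) :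
    ((∑ e ∈ d.divisors, e : ℕ) : ℝ) / d ≤ ((∑ e ∈ n.divisors, e : ℕ) : ℝ) / n := by
  obtain ⟨k, rfl⟩ := hdn
  have hd0 : 0 < d := by
    rcases Nat.eq_zero_or_pos d with h | h
    · simp [h] at hn
    · exact h
  have hk0 : 0 < k := by
    rcases Nat.eq_zero_or_pos k with h | h
    · simp [h] at hn
    · exact h
  have key : (∑ e ∈ d.divisors, e) * k ≤ ∑ e ∈ (d * k).divisors, e := by
    rw [Finset.sum_mul]
    have hinj : ∀ x ∈ d.divisors, ∀ y ∈ d.divisors, x * k = y * k → x = y := by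
      intro x _ y _ hxy
      exact Nat.eq_of_mul_eq_mul_right hk0 hxy
    have hsi := Finset.sum_image (g := fun e : ℕ => e * k) (f := fun e : ℕ => e)
      (s := d.divisors) hinj
    calc ∑ e ∈ d.divisors, e * k
        = ∑ e ∈ d.divisors.image (fun e => e * k), e := by rw [hsi]
      _ ≤ ∑ e ∈ (d * k).divisors, e := by
          apply Finset.sum_le_sum_of_subset
          intro e he
          obtain ⟨x, hx, rfl⟩ := Finset.mem_image.mp he
          exact Nat.mem_divisors.mpr
            ⟨mul_dvd_mul ((Nat.mem_divisors.mp hx).1) dvd_rfl, hn.ne'⟩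
  have keyR : ((∑ e ∈ d.divisors, e : ℕ) : ℝ) * k ≤ ((∑ e ∈ (d * k).divisors, e : ℕ) : ℝ) := by
    exact_mod_cast key
  push_cast at keyR
  have hdR : (0 : ℝ) < d := by exact_mod_cast hd0
  have hkR : (0 : ℝ) < k := by exact_mod_cast hk0
  rw [div_le_div_iff₀ hdR (by positivity : (0:ℝ) < ((d * k : ℕ) : ℝ))]
  push_cast
  nlinarith [keyR]

lemma sigma_div_eq_sum_inv {d : ℕ} (hd : 0 < d) :
    ((∑ e ∈ d.divisors, e : ℕ) : ℝ) / d = ∑ e ∈ d.divisors, ((e : ℝ))⁻¹ := by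
  have h1 : (∑ e ∈ d.divisors, e) = ∑ e ∈ d.divisors, d / e :=
    (Nat.sum_div_divisors d id).symm
  rw [h1, Nat.cast_sum, Finset.sum_div]
  refine Finset.sum_congr rfl fun e he => ?_
  have hed : e ∣ d := (Nat.mem_divisors.mp he).1
  have he0 : (e : ℝ) ≠ 0 := Nat.cast_ne_zero.mpr (Nat.pos_of_mem_divisors he).ne'
  have hd0 : (d : ℝ) ≠ 0 := Nat.cast_ne_zero.mpr hd.ne'
  rw [Nat.cast_div hed he0]
  field_simp

lemma prod_one_add_le {d : ℕ} (hd : 0 < d) :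
    ∏ p ∈ d.primeFactors, (1 + (p : ℝ)⁻¹) ≤ ((∑ e ∈ d.divisors, e : ℕ) : ℝ) / d := by
  rw [sigma_div_eq_sum_inv hd]
  have hexp : ∏ p ∈ d.primeFactors, (1 + (p : ℝ)⁻¹)
      = ∑ T ∈ d.primeFactors.powerset, ∏ p ∈ T, (p : ℝ)⁻¹ := by
    have h := Finset.prod_add (fun p : ℕ => ((p : ℝ))⁻¹) (fun _ => (1 : ℝ)) d.primeFactors
    simpa [add_comm] using h
  rw [hexp]
  have hcast : ∀ T ∈ d.primeFactors.powerset,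
      ∏ p ∈ T, ((p : ℝ))⁻¹ = (((∏ p ∈ T, p : ℕ) : ℝ))⁻¹ := by
    intro T hT; push_cast; rw [← Finset.prod_inv_distrib]
  rw [Finset.sum_congr rfl hcast]
  have hinj : ∀ T ∈ d.primeFactors.powerset, ∀ T' ∈ d.primeFactors.powerset,
      (∏ p ∈ T, p) = (∏ p ∈ T', p) → T = T' := by
    intro T hT T' hT' hprod
    rw [Finset.mem_powerset] at hT hT'
    ext p
    constructor
    · intro hp
      have hpp := Nat.prime_of_mem_primeFactors (hT hp)
      have hdp : p ∣ ∏ q ∈ T', q := hprod ▸ Finset.dvd_prod_of_mem _ hp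
      obtain ⟨q, hq, hpq⟩ := hpp.prime.exists_mem_finset_dvd hdp
      have : p = q := ((Nat.prime_dvd_prime_iff_eq hpp
        (Nat.prime_of_mem_primeFactors (hT' hq))).mp hpq)
      exact this ▸ hq
    · intro hp
      have hpp := Nat.prime_of_mem_primeFactors (hT' hp)
      have hdp : p ∣ ∏ q ∈ T, q := hprod ▸ Finset.dvd_prod_of_mem _ hp
      obtain ⟨q, hq, hpq⟩ := hpp.prime.exists_mem_finset_dvd hdp
      have : p = q := ((Nat.prime_dvd_prime_iff_eq hpp
        (Nat.prime_of_mem_primeFactors (hT hq))).mp hpq)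
      exact this ▸ hq
  have hsi := Finset.sum_image (g := fun T : Finset ℕ => ∏ p ∈ T, p)
    (f := fun e : ℕ => ((e : ℝ))⁻¹) (s := d.primeFactors.powerset) hinj
  rw [← hsi]
  apply Finset.sum_le_sum_of_subset_of_nonneg
  · intro e he
    obtain ⟨T, hT, rfl⟩ := Finset.mem_image.mp he
    rw [Finset.mem_powerset] at hT
    refine Nat.mem_divisors.mpr ⟨?_, hd.ne'⟩
    exact Finset.prod_primes_dvd d
      (fun p hp => (Nat.prime_of_mem_primeFactors (hT hp)).prime)
      (fun p hp => Nat.dvd_of_mem_primeFactors (hT hp))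
  · intro e _ _; positivity

lemma totient_prod_real {d : ℕ} (hd : 0 < d) :
    ∏ p ∈ d.primeFactors, (1 - (p : ℝ)⁻¹) = (Nat.totient d : ℝ) / d := by
  have h := Nat.totient_eq_mul_prod_factors d
  have h2 := congrArg (fun q : ℚ => (q : ℝ)) h
  push_cast at h2
  rw [h2]
  have hd0 : (d : ℝ) ≠ 0 := Nat.cast_ne_zero.mpr hd.ne'
  field_simp

/-- `KL n = ∑_{d ∣ n} d · log (d / (2 φ(d)))`. -/
noncomputable def KL (n : ℕ) : ℝ :=
  ∑ d ∈ n.divisors, (d : ℝ) * Real.log ((d : ℝ) / (2 * (Nat.totient d : ℝ)))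

/-- `h n = σ(n) / n`. -/
noncomputable def h (n : ℕ) : ℝ := ((∑ d ∈ n.divisors, d : ℕ) : ℝ) / (n : ℝ)

theorem h_ge_of_KL_pos_odd (n : ℕ) (hn : 0 < n) (hodd : Odd n) (hKL : KL n > 0) :
    h n ≥ 16 / Real.pi ^ 2 := by
  -- find a divisor with a positive term
  obtain ⟨d, hdmem, hdpos⟩ :
      ∃ d ∈ n.divisors, 0 < (d : ℝ) * Real.log ((d : ℝ) / (2 * (Nat.totient d : ℝ))) := by
    by_contra hcon
    push_neg at hcon
    unfold KL at hKL
    exact absurd (Finset.sum_nonpos hcon) (not_le.mpr hKL)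
  have hddvd : d ∣ n := (Nat.mem_divisors.mp hdmem).1
  have hd0 : 0 < d := Nat.pos_of_mem_divisors hdmem
  have hφ0 : 0 < Nat.totient d := Nat.totient_pos.mpr hd0
  have hdR : (0 : ℝ) < d := by exact_mod_cast hd0
  have hφR : (0 : ℝ) < (Nat.totient d : ℝ) := by exact_mod_cast hφ0
  have hlog : 0 < Real.log ((d : ℝ) / (2 * (Nat.totient d : ℝ))) := by
    nlinarith [hdpos]
  have hgt1 : 1 < (d : ℝ) / (2 * (Nat.totient d : ℝ)) := by
    by_contra hx
    push_neg at hx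
    have := Real.log_nonpos (by positivity) hx
    linarith
  have h2φ : 2 * (Nat.totient d : ℝ) < d := by
    have hpos : (0 : ℝ) < 2 * (Nat.totient d : ℝ) := by positivity
    rw [lt_div_iff₀ hpos] at hgt1
    linarith
  -- d is odd, so 2 is not among its prime factors
  have h2notmem : (2 : ℕ) ∉ d.primeFactors := by
    intro h2
    have h2d : 2 ∣ d := Nat.dvd_of_mem_primeFactors h2
    have h2n : 2 ∣ n := h2d.trans hddvd
    rw [Nat.odd_iff] at hodd
    omega
  -- assemble the chain of inequalities
  set S := d.primeFactors with hS
  have hP : ∀ p ∈ S, p.Prime := fun p hp => Nat.prime_of_mem_primeFactors hp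
  have hfact := prod_one_sub_inv_sq_ge S hP h2notmem
  have hC : ∏ p ∈ S, (1 - (p : ℝ)⁻¹) = (Nat.totient d : ℝ) / d := totient_prod_real hd0
  have hsplit : ∀ p ∈ S, (1 - ((p : ℝ) ^ 2)⁻¹) = (1 + (p : ℝ)⁻¹) * (1 - (p : ℝ)⁻¹) := by
    intro p hp
    have hp0 : (p : ℝ) ≠ 0 := Nat.cast_ne_zero.mpr (hP p hp).pos.ne'
    field_simp
    ring
  have hprodsplit : ∏ p ∈ S, (1 - ((p : ℝ) ^ 2)⁻¹)
      = (∏ p ∈ S, (1 + (p : ℝ)⁻¹)) * ∏ p ∈ S, (1 - (p : ℝ)⁻¹) := by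
    rw [← Finset.prod_mul_distrib]
    exact Finset.prod_congr rfl hsplit
  have hApos : (0 : ℝ) < ∏ p ∈ S, (1 + (p : ℝ)⁻¹) := by
    apply Finset.prod_pos
    intro p hp
    have : (0 : ℝ) < p := by exact_mod_cast (hP p hp).pos
    positivity
  have hπ : (0 : ℝ) < Real.pi := Real.pi_pos
  -- ∏ (1+p⁻¹) = ∏ (1-p⁻²) * (d / φ d) ≥ (8/π²) * 2
  have hAval : ∏ p ∈ S, (1 + (p : ℝ)⁻¹)
      = (∏ p ∈ S, (1 - ((p : ℝ) ^ 2)⁻¹)) * ((d : ℝ) / (Nat.totient d : ℝ)) := by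
    rw [hprodsplit, hC]
    field_simp
  have hdφ : (2 : ℝ) < (d : ℝ) / (Nat.totient d : ℝ) := by
    rw [lt_div_iff₀ hφR]
    linarith
  have hA : 16 / Real.pi ^ 2 ≤ ∏ p ∈ S, (1 + (p : ℝ)⁻¹) := by
    rw [hAval]
    have h8 : (0 : ℝ) < 8 / Real.pi ^ 2 := by positivity
    calc (16 : ℝ) / Real.pi ^ 2 = (8 / Real.pi ^ 2) * 2 := by ring
      _ ≤ (∏ p ∈ S, (1 - ((p : ℝ) ^ 2)⁻¹)) * ((d : ℝ) / (Nat.totient d : ℝ)) := by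
          apply mul_le_mul hfact (le_of_lt hdφ) (by norm_num) (by linarith [hfact])
  have hB := prod_one_add_le hd0
  have hmono := sigma_div_mono hddvd hn
  unfold h
  calc (16 : ℝ) / Real.pi ^ 2 ≤ ∏ p ∈ S, (1 + (p : ℝ)⁻¹) := hA
    _ ≤ ((∑ e ∈ d.divisors, e : ℕ) : ℝ) / d := hB
    _ ≤ ((∑ e ∈ n.divisors, e : ℕ) : ℝ) / n := hmono
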